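/- For a 1-field P on a finite set E ⊂ ℝ^d, define A(P;a,b) = |P_a(a) - P_b(a) + P_a(b) - P_b(b)|/|a-b|² and B(P;a,b) = |∇P_a - ∇P_b|/|a-b|. Then Γ¹(P;E) := 2 sup_{x∈ℝ^d} max_{a≠b} |P_a(x) - P_b(x)|/(|a-x|² + |b-x|²) equals max_{a≠b} (√(A(P;a,b)² + B(P;a,b)²) + A(P;a,b)). -/

import Mathlib

open RealInnerProductSpace

private lemma real_core' (β w s L S : ℝ) (hβ0 : 0 ≤ β) (hs0 : 0 ≤ s)
    (hL : 0 < L) (hS0 : 0 ≤ S) (hS2 : S^2 = 4*β^2 + w^2*L^2) :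
    (β + w*s)*L^2 ≤ (S+2*β)*(s^2+L^2/4) := by
  have hL2 : (0:ℝ) < L^2 := by positivity
  rcases eq_or_lt_of_le (by positivity : (0:ℝ) ≤ S + 2*β) with hT | hT
  · have hβz : β = 0 := by nlinarith
    have hSz : S = 0 := by nlinarith
    have hw2 : w^2 * L^2 = 0 := by nlinarith
    have hwz : w = 0 := by
      rcases mul_eq_zero.mp hw2 with h | h
      · exact pow_eq_zero_iff (by norm_num) |>.mp h
      · exact absurd h (by positivity)
    rw [hβz, hwz, hSz]; nlinarith [sq_nonneg s]
  · nlinarith [sq_nonneg (2*(S+2*β)*s - w*L^2), hT, hS2, mul_pos hT hT]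


section
variable {d : ℕ}

private lemma num_eq' (f : EuclideanSpace ℝ (Fin d) → ℝ)
    (D : EuclideanSpace ℝ (Fin d) → EuclideanSpace ℝ (Fin d))
    (P : EuclideanSpace ℝ (Fin d) → EuclideanSpace ℝ (Fin d) → ℝ)
    (hP : ∀ a x, P a x = f a + ⟪D a, x - a⟫) (a b x : EuclideanSpace ℝ (Fin d)) :
    P a x - P b x = (P a a - P b a + P a b - P b b)/2
      + ⟪D a - D b, x - (2:ℝ)⁻¹ • (a + b)⟫ := by
  simp only [hP, inner_sub_left, inner_sub_right, inner_add_right, real_inner_smul_right]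
  ring

private lemma den_eq' (a b x : EuclideanSpace ℝ (Fin d)) :
    ‖a - x‖^2 + ‖b - x‖^2 = 2*‖x - (2:ℝ)⁻¹ • (a + b)‖^2 + ‖a - b‖^2/2 := by
  have ha : a - x = (2:ℝ)⁻¹ • (a - b) - (x - (2:ℝ)⁻¹ • (a + b)) := by module
  have hb : b - x = -((2:ℝ)⁻¹ • (a - b)) - (x - (2:ℝ)⁻¹ • (a + b)) := by module
  rw [ha, hb]
  set u := (2:ℝ)⁻¹ • (a - b) with hu
  set q := x - (2:ℝ)⁻¹ • (a + b) with hq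
  have h1 : ‖-u - q‖ = ‖u + q‖ := by
    rw [show -u - q = -(u + q) by module, norm_neg]
  rw [h1]
  have h2 : ‖u - q‖^2 = ‖u‖^2 - 2*⟪u,q⟫ + ‖q‖^2 := by rw [norm_sub_sq_real]
  have h3 : ‖u + q‖^2 = ‖u‖^2 + 2*⟪u,q⟫ + ‖q‖^2 := by rw [norm_add_sq_real]
  have h4 : ‖u‖ = 2⁻¹ * ‖a - b‖ := by rw [hu, norm_smul]; norm_num
  rw [h2, h3, h4]; ring

private lemma key_ub (f : EuclideanSpace ℝ (Fin d) → ℝ)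
    (D : EuclideanSpace ℝ (Fin d) → EuclideanSpace ℝ (Fin d))
    (P : EuclideanSpace ℝ (Fin d) → EuclideanSpace ℝ (Fin d) → ℝ)
    (hP : ∀ a x, P a x = f a + ⟪D a, x - a⟫) (a b : EuclideanSpace ℝ (Fin d))
    (hab : a ≠ b) (x : EuclideanSpace ℝ (Fin d)) :
    |P a x - P b x| / (‖a - x‖ ^ 2 + ‖b - x‖ ^ 2)
      ≤ (Real.sqrt ((|P a a - P b a + P a b - P b b| / ‖a - b‖ ^ 2) ^ 2
            + (‖D a - D b‖ / ‖a - b‖) ^ 2)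
          + |P a a - P b a + P a b - P b b| / ‖a - b‖ ^ 2) / 2 := by
  have hL : (0:ℝ) < ‖a - b‖ := by
    rw [norm_pos_iff]; exact sub_ne_zero_of_ne hab
  set L := ‖a - b‖ with hLdef
  have hL2 : (0:ℝ) < L^2 := by positivity
  set α := (P a a - P b a + P a b - P b b)/2 with hα
  set v := D a - D b with hv
  set p := x - (2:ℝ)⁻¹ • (a + b) with hp
  set β := |α| with hβ
  set w := ‖v‖ with hw
  have habs : |P a a - P b a + P a b - P b b| = 2*β := by
    have h2α : P a a - P b a + P a b - P b b = 2*α := by rw [hα]; ring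
    rw [h2α, abs_mul, hβ]; norm_num
  rw [habs]
  set SA := Real.sqrt ((2*β/L^2)^2 + (w/L)^2) with hSAdef
  have hSA0 : 0 ≤ SA := Real.sqrt_nonneg _
  have hSA2 : SA^2 = (2*β/L^2)^2 + (w/L)^2 := Real.sq_sqrt (by positivity)
  set S := SA * L^2 with hSdef
  have hS0 : 0 ≤ S := by positivity
  have hS2 : S^2 = 4*β^2 + w^2*L^2 := by
    rw [hSdef, mul_pow, hSA2]; field_simp; ring
  have hGrw : SA + 2*β/L^2 = (S + 2*β)/L^2 := by rw [hSdef]; field_simp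
  rw [hGrw]
  have hdenpos : (0:ℝ) < ‖a - x‖^2 + ‖b - x‖^2 := by
    rw [den_eq' a b x, ← hp, ← hLdef]
    positivity
  rw [div_le_iff₀ hdenpos, num_eq' f D P hP a b x, den_eq' a b x, ← hα, ← hv, ← hp, ← hLdef]
  have hCS : |α + ⟪v, p⟫| ≤ β + w * ‖p‖ := by
    calc |α + ⟪v, p⟫| ≤ |α| + |⟪v, p⟫| := abs_add_le _ _
    _ ≤ β + w * ‖p‖ := by
        gcongr
        rw [hw]; exact abs_real_inner_le_norm v p
  have hcore := real_core' β w ‖p‖ L S (abs_nonneg α) (norm_nonneg p) hL hS0 hS2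
  have hrw2 : (S+2*β)/L^2/2 * (2*‖p‖^2 + L^2/2) = ((S+2*β)*(‖p‖^2+L^2/4))/L^2 := by
    field_simp; ring
  rw [hrw2, le_div_iff₀ hL2]
  calc |α + ⟪v, p⟫| * L^2 ≤ (β + w * ‖p‖) * L^2 := by
        exact mul_le_mul_of_nonneg_right hCS hL2.le
  _ ≤ (S+2*β)*(‖p‖^2+L^2/4) := hcore


private lemma real_att' (β w L S : ℝ) (hw : w ≠ 0) (hS2 : S^2 = 4*β^2 + w^2*L^2) :
    (β + w*((S-2*β)/(2*w)))*L^2 = (S+2*β)*(((S-2*β)/(2*w))^2+L^2/4) := by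
  field_simp
  linear_combination (-4*(S - 2*β)) * hS2

section
variable {d : ℕ}

private lemma key_att (f : EuclideanSpace ℝ (Fin d) → ℝ)
    (D : EuclideanSpace ℝ (Fin d) → EuclideanSpace ℝ (Fin d))
    (P : EuclideanSpace ℝ (Fin d) → EuclideanSpace ℝ (Fin d) → ℝ)
    (hP : ∀ a x, P a x = f a + ⟪D a, x - a⟫) (a b : EuclideanSpace ℝ (Fin d))
    (hab : a ≠ b) :
    ∃ x, |P a x - P b x| / (‖a - x‖ ^ 2 + ‖b - x‖ ^ 2)
      = (Real.sqrt ((|P a a - P b a + P a b - P b b| / ‖a - b‖ ^ 2) ^ 2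
            + (‖D a - D b‖ / ‖a - b‖) ^ 2)
          + |P a a - P b a + P a b - P b b| / ‖a - b‖ ^ 2) / 2 := by
  have hL : (0:ℝ) < ‖a - b‖ := by
    rw [norm_pos_iff]; exact sub_ne_zero_of_ne hab
  set L := ‖a - b‖ with hLdef
  have hL2 : (0:ℝ) < L^2 := by positivity
  set α := (P a a - P b a + P a b - P b b)/2 with hα
  set v := D a - D b with hv
  set β := |α| with hβ
  set w := ‖v‖ with hw
  have hβ0 : 0 ≤ β := abs_nonneg _
  have hw0 : 0 ≤ w := norm_nonneg _
  have habs : |P a a - P b a + P a b - P b b| = 2*β := by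
    have h2α : P a a - P b a + P a b - P b b = 2*α := by rw [hα]; ring
    rw [h2α, abs_mul, hβ]; norm_num
  rw [habs]
  set SA := Real.sqrt ((2*β/L^2)^2 + (w/L)^2) with hSAdef
  have hSA0 : 0 ≤ SA := Real.sqrt_nonneg _
  have hSA2 : SA^2 = (2*β/L^2)^2 + (w/L)^2 := Real.sq_sqrt (by positivity)
  set S := SA * L^2 with hSdef
  have hS0 : 0 ≤ S := by positivity
  have hS2 : S^2 = 4*β^2 + w^2*L^2 := by
    rw [hSdef, mul_pow, hSA2]; field_simp; ring
  have hGrw : SA + 2*β/L^2 = (S + 2*β)/L^2 := by rw [hSdef]; field_simp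
  rw [hGrw]
  set m := (2:ℝ)⁻¹ • (a + b) with hm
  clear_value β w SA S α v L m
  by_cases hwz : w = 0
  · -- v = 0, use x = m
    refine ⟨m, ?_⟩
    have hnum : P a m - P b m = α := by
      rw [num_eq' f D P hP a b m, ← hα, ← hv, ← hm, sub_self, inner_zero_right, add_zero]
    have hden : ‖a - m‖^2 + ‖b - m‖^2 = L^2/2 := by
      rw [den_eq' a b m, ← hm, sub_self, ← hLdef]
      simp
    have hSAv : SA = 2*β/L^2 := by
      rw [hSAdef, hwz]
      rw [show ((0:ℝ)/L)^2 = 0 by ring, add_zero, Real.sqrt_sq (by positivity)]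
    rw [hnum, hden, hSdef, hSAv, ← hβ]
    field_simp
    ring
  · have hwpos : 0 < w := lt_of_le_of_ne hw0 (Ne.symm hwz)
    set t := (S - 2*β)/(2*w) with ht
    have hS2β : 2*β ≤ S := by nlinarith [hS2, hS0, hβ0, sq_nonneg L, mul_pos hwpos hwpos, mul_pos hL hL]
    have ht0 : 0 ≤ t := div_nonneg (by linarith) (by positivity)
    set σ := if 0 ≤ α then (1:ℝ) else -1 with hσ
    clear_value t σ
    refine ⟨m + (σ * t / w) • v, ?_⟩
    have hpm : (m + (σ * t / w) • v) - (2:ℝ)⁻¹ • (a+b) = (σ*t/w) • v := by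
      rw [← hm]; exact add_sub_cancel_left m _
    have hip : ⟪v, (σ*t/w) • v⟫ = σ*t*w := by
      rw [real_inner_smul_right, real_inner_self_eq_norm_sq, ← hw]
      field_simp
    have hsig : |σ| = 1 := by rw [hσ]; split <;> norm_num
    have hnormp : ‖(σ*t/w) • v‖ = t := by
      rw [norm_smul, Real.norm_eq_abs, abs_div, abs_mul, hsig, abs_of_nonneg ht0, ← hw,
        abs_of_pos hwpos]
      field_simp
    have habs2 : |α + σ*t*w| = β + t*w := by
      rw [hσ]; split_ifs with h
      · rw [show α + 1*t*w = α + t*w by ring,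
          abs_of_nonneg (add_nonneg h (mul_nonneg ht0 hw0)), hβ, abs_of_nonneg h]
      · push_neg at h
        rw [show α + (-1)*t*w = α - t*w by ring,
          abs_of_nonpos (sub_nonpos.mpr (h.le.trans (mul_nonneg ht0 hw0))), hβ, abs_of_neg h]
        ring
    have hnum : P a (m + (σ * t / w) • v) - P b (m + (σ * t / w) • v) = α + σ*t*w := by
      rw [num_eq' f D P hP a b _, ← hα, ← hv, hpm, hip]
    have hden : ‖a - (m + (σ * t / w) • v)‖^2 + ‖b - (m + (σ * t / w) • v)‖^2
        = 2*t^2 + L^2/2 := by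
      rw [den_eq' a b _, ← hLdef, hpm, hnormp]
    rw [hnum, hden, habs2]
    have hatt := real_att' β w L S hwz hS2
    rw [← ht] at hatt
    have hdpos : (0:ℝ) < 2*t^2 + L^2/2 := by positivity
    rw [div_div, div_eq_div_iff hdpos.ne' (by positivity : (0:ℝ) < L^2*2).ne']
    linear_combination 2*hatt


theorem gamma1_sup_eq_closed_form {d : ℕ}
    (E : Finset (EuclideanSpace ℝ (Fin d))) (hE : 2 ≤ E.card)
    (f : EuclideanSpace ℝ (Fin d) → ℝ)
    (D : EuclideanSpace ℝ (Fin d) → EuclideanSpace ℝ (Fin d))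
    (P : EuclideanSpace ℝ (Fin d) → EuclideanSpace ℝ (Fin d) → ℝ)
    (hP : ∀ a x, P a x = f a + ⟪D a, x - a⟫) :
    2 * ⨆ x : EuclideanSpace ℝ (Fin d),
        sSup {r : ℝ | ∃ a ∈ E, ∃ b ∈ E, a ≠ b ∧
          r = |P a x - P b x| / (‖a - x‖ ^ 2 + ‖b - x‖ ^ 2)}
      = sSup {r : ℝ | ∃ a ∈ E, ∃ b ∈ E, a ≠ b ∧
          r = Real.sqrt ((|P a a - P b a + P a b - P b b| / ‖a - b‖ ^ 2) ^ 2
                + (‖D a - D b‖ / ‖a - b‖) ^ 2)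
              + |P a a - P b a + P a b - P b b| / ‖a - b‖ ^ 2} := by
  classical
  obtain ⟨a₀, ha₀, b₀, hb₀, hab₀⟩ := Finset.one_lt_card.mp (lt_of_lt_of_le one_lt_two hE)
  set Gf : EuclideanSpace ℝ (Fin d) → EuclideanSpace ℝ (Fin d) → ℝ := fun a b =>
    Real.sqrt ((|P a a - P b a + P a b - P b b| / ‖a - b‖ ^ 2) ^ 2
        + (‖D a - D b‖ / ‖a - b‖) ^ 2)
      + |P a a - P b a + P a b - P b b| / ‖a - b‖ ^ 2 with hGf
  set Ff : EuclideanSpace ℝ (Fin d) → EuclideanSpace ℝ (Fin d) →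
      EuclideanSpace ℝ (Fin d) → ℝ := fun a b x =>
    |P a x - P b x| / (‖a - x‖ ^ 2 + ‖b - x‖ ^ 2) with hFf
  have hGset : {r : ℝ | ∃ a ∈ E, ∃ b ∈ E, a ≠ b ∧
      r = Real.sqrt ((|P a a - P b a + P a b - P b b| / ‖a - b‖ ^ 2) ^ 2
            + (‖D a - D b‖ / ‖a - b‖) ^ 2)
          + |P a a - P b a + P a b - P b b| / ‖a - b‖ ^ 2}
      = {r : ℝ | ∃ a ∈ E, ∃ b ∈ E, a ≠ b ∧ r = Gf a b} := rfl
  have hSset : ∀ x, {r : ℝ | ∃ a ∈ E, ∃ b ∈ E, a ≠ b ∧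
      r = |P a x - P b x| / (‖a - x‖ ^ 2 + ‖b - x‖ ^ 2)}
      = {r : ℝ | ∃ a ∈ E, ∃ b ∈ E, a ≠ b ∧ r = Ff a b x} := fun _ => rfl
  rw [hGset]
  simp only [hSset]
  have hGfin : ({r : ℝ | ∃ a ∈ E, ∃ b ∈ E, a ≠ b ∧ r = Gf a b} : Set ℝ).Finite := by
    apply Set.Finite.subset (Set.Finite.image (fun p : _ × _ => Gf p.1 p.2)
      ((E.finite_toSet).prod (E.finite_toSet)))
    rintro r ⟨a, ha, b, hb, hab, rfl⟩
    exact ⟨(a, b), ⟨ha, hb⟩, rfl⟩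
  have hGne : ({r : ℝ | ∃ a ∈ E, ∃ b ∈ E, a ≠ b ∧ r = Gf a b} : Set ℝ).Nonempty :=
    ⟨Gf a₀ b₀, a₀, ha₀, b₀, hb₀, hab₀, rfl⟩
  have hSfin : ∀ x, ({r : ℝ | ∃ a ∈ E, ∃ b ∈ E, a ≠ b ∧ r = Ff a b x} : Set ℝ).Finite := by
    intro x
    apply Set.Finite.subset (Set.Finite.image (fun p : _ × _ => Ff p.1 p.2 x)
      ((E.finite_toSet).prod (E.finite_toSet)))
    rintro r ⟨a, ha, b, hb, hab, rfl⟩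
    exact ⟨(a, b), ⟨ha, hb⟩, rfl⟩
  have hSne : ∀ x, ({r : ℝ | ∃ a ∈ E, ∃ b ∈ E, a ≠ b ∧ r = Ff a b x} : Set ℝ).Nonempty :=
    fun x => ⟨Ff a₀ b₀ x, a₀, ha₀, b₀, hb₀, hab₀, rfl⟩
  set M := sSup {r : ℝ | ∃ a ∈ E, ∃ b ∈ E, a ≠ b ∧ r = Gf a b} with hM
  have hub : ∀ x, sSup {r : ℝ | ∃ a ∈ E, ∃ b ∈ E, a ≠ b ∧ r = Ff a b x} ≤ M / 2 := by
    intro x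
    apply csSup_le (hSne x)
    rintro r ⟨a, ha, b, hb, hab, rfl⟩
    have h1 := key_ub f D P hP a b hab x
    have h2 : Gf a b ≤ M := le_csSup hGfin.bddAbove ⟨a, ha, b, hb, hab, rfl⟩
    calc Ff a b x ≤ Gf a b / 2 := h1
    _ ≤ M / 2 := by
        have := (div_le_div_iff_of_pos_right (by norm_num : (0:ℝ) < 2)).mpr h2
        exact this
  have hile : (⨆ x, sSup {r : ℝ | ∃ a ∈ E, ∃ b ∈ E, a ≠ b ∧ r = Ff a b x}) ≤ M / 2 :=
    ciSup_le hub
  have hige : M / 2 ≤ ⨆ x, sSup {r : ℝ | ∃ a ∈ E, ∃ b ∈ E, a ≠ b ∧ r = Ff a b x} := by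
    obtain ⟨a, ha, b, hb, hab, hMeq⟩ := hGne.csSup_mem hGfin
    obtain ⟨x₀, hx₀⟩ := key_att f D P hP a b hab
    have hmem : Ff a b x₀ ∈ {r : ℝ | ∃ a ∈ E, ∃ b ∈ E, a ≠ b ∧ r = Ff a b x₀} :=
      ⟨a, ha, b, hb, hab, rfl⟩
    have h1 : M / 2 ≤ sSup {r : ℝ | ∃ a ∈ E, ∃ b ∈ E, a ≠ b ∧ r = Ff a b x₀} := by
      have h2 := le_csSup (hSfin x₀).bddAbove hmem
      have h3 : Ff a b x₀ = Gf a b / 2 := hx₀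
      rw [h3, ← hMeq] at h2
      exact h2
    have hbdd : BddAbove (Set.range fun x =>
        sSup {r : ℝ | ∃ a ∈ E, ∃ b ∈ E, a ≠ b ∧ r = Ff a b x}) := by
      refine ⟨M / 2, ?_⟩
      rintro r ⟨x, rfl⟩
      exact hub x
    exact h1.trans (le_ciSup hbdd x₀)
  have heq : (⨆ x, sSup {r : ℝ | ∃ a ∈ E, ∃ b ∈ E, a ≠ b ∧ r = Ff a b x}) = M / 2 :=
    le_antisymm hile hige
  rw [heq]
  ring

end
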